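/- Let s₀ < b < +∞ and let h : [s₀, b) → ℝ be continuously differentiable with h(s) < 0 for all s, satisfying lim_{s → b⁻} h(s) = −∞. Let w : [s₀, b) → ℝ be a continuously differentiable solution of w'(s) = −(1 + w(s)²)·(1 − h(s)·w(s)). If there exist M < 0 and s₁ ∈ [s₀, b) such that w(s) ≤ M for every s ∈ [s₁, b), then there exists w₁ ≤ M with lim_{s → b⁻} w(s) = w₁, and lim_{s → b⁻} w'(s) = +∞. -/

import Mathlib

open Set Filter

/-- If `h ∈ C¹[s₀, b)` is negative, `b < +∞`, `h(s) → −∞` as `s → b⁻`,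
and `w` solves `w' = −(1 + w²)(1 − h w)` on `[s₀, b)` with `w ≤ M < 0` near `b`, then
`w` has a finite limit `w₁ ≤ M` at `b⁻` and `w' → +∞` at `b⁻`. -/
theorem bounded_above_solution_limit_negative_case
    (s₀ b : ℝ) (hs₀b : s₀ < b)
    (h : ℝ → ℝ)
    (hC1 : ContDiffOn ℝ 1 h (Set.Ico s₀ b))
    (hneg : ∀ s ∈ Set.Ico s₀ b, h s < 0)
    (hblow : Filter.Tendsto h (nhdsWithin b (Set.Iio b)) Filter.atBot)
    (w : ℝ → ℝ)
    (hwC1 : ContDiffOn ℝ 1 w (Set.Ico s₀ b))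
    (hode : ∀ s ∈ Set.Ico s₀ b,
      HasDerivWithinAt w (-((1 + w s ^ 2) * (1 - h s * w s))) (Set.Ico s₀ b) s)
    (M : ℝ) (hM : M < 0) (s₁ : ℝ) (hs₁ : s₁ ∈ Set.Ico s₀ b)
    (hbound : ∀ s ∈ Set.Ico s₁ b, w s ≤ M) :
    (∃ w₁ : ℝ, w₁ ≤ M ∧ Filter.Tendsto w (nhdsWithin b (Set.Iio b)) (nhds w₁)) ∧
    Filter.Tendsto (fun s => -((1 + w s ^ 2) * (1 - h s * w s)))
      (nhdsWithin b (Set.Iio b)) Filter.atTop := by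
  have hhM : Tendsto (fun s => h s * M) (nhdsWithin b (Set.Iio b)) atTop :=
    hblow.atBot_mul_const_of_neg hM
  have hlow : Tendsto (fun s => (1 + M ^ 2) * (h s * M - 1))
      (nhdsWithin b (Set.Iio b)) atTop := by
    have h1 : Tendsto (fun s => h s * M - 1) (nhdsWithin b (Set.Iio b)) atTop :=
      tendsto_atTop_add_const_right _ (-1) hhM
    exact h1.const_mul_atTop (by positivity)
  have hev : ∀ᶠ s in nhdsWithin b (Set.Iio b),
      (1 + M ^ 2) * (h s * M - 1) ≤ -((1 + w s ^ 2) * (1 - h s * w s)) := by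
    have hmem : Set.Ioo s₁ b ∈ nhdsWithin b (Set.Iio b) := Ioo_mem_nhdsLT hs₁.2
    filter_upwards [hmem, hhM.eventually_ge_atTop 1] with s hs hge
    have hws : w s ≤ M := hbound s ⟨hs.1.le, hs.2⟩
    have hhs : h s < 0 := hneg s ⟨hs₁.1.trans hs.1.le, hs.2⟩
    have hhw : h s * M ≤ h s * w s := mul_le_mul_of_nonpos_left hws hhs.le
    have hw2 : M ^ 2 ≤ w s ^ 2 := by nlinarith
    have h1 : (1 + M ^ 2) * (h s * M - 1) ≤ (1 + w s ^ 2) * (h s * M - 1) :=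
      mul_le_mul_of_nonneg_right (by linarith) (by linarith)
    have h2 : (1 + w s ^ 2) * (h s * M - 1) ≤ (1 + w s ^ 2) * (h s * w s - 1) :=
      mul_le_mul_of_nonneg_left (by linarith) (by positivity)
    nlinarith [h1, h2]
  have part2 : Tendsto (fun s => -((1 + w s ^ 2) * (1 - h s * w s)))
      (nhdsWithin b (Set.Iio b)) atTop := tendsto_atTop_mono' _ hev hlow
  refine ⟨?_, part2⟩
  -- get an interval on which the derivative is ≥ 1
  obtain ⟨a, hab, ha⟩ : ∃ a ∈ Set.Iio b, ∀ s ∈ Set.Ioo a b,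
      (1:ℝ) ≤ -((1 + w s ^ 2) * (1 - h s * w s)) := by
    have := part2.eventually_ge_atTop 1
    rw [eventually_iff, mem_nhdsLT_iff_exists_Ioo_subset] at this
    obtain ⟨a, ha, hsub⟩ := this
    exact ⟨a, ha, fun s hs => hsub hs⟩
  set s₂ : ℝ := max a s₁ with hs₂def
  have hs₂b : s₂ < b := max_lt hab hs₁.2
  have hs₂0 : s₀ ≤ s₂ := hs₁.1.trans (le_max_right a s₁)
  have hsub : Set.Ico s₂ b ⊆ Set.Ico s₀ b := Ico_subset_Ico_left hs₂0
  have hmono : StrictMonoOn w (Set.Ico s₂ b) := by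
    apply strictMonoOn_of_deriv_pos (convex_Ico s₂ b)
    · exact (hwC1.continuousOn).mono hsub
    · intro x hx
      rw [interior_Ico] at hx
      have hx' : x ∈ Set.Ico s₀ b := ⟨hs₂0.trans hx.1.le, hx.2⟩
      have hnb : Set.Ico s₀ b ∈ nhds x :=
        mem_of_superset (Ioo_mem_nhds (lt_of_le_of_lt hs₂0 hx.1) hx.2) Set.Ioo_subset_Ico_self
      have hd : HasDerivAt w (-((1 + w x ^ 2) * (1 - h x * w x))) x :=
        (hode x hx').hasDerivAt hnb
      rw [hd.deriv]
      have : (1:ℝ) ≤ -((1 + w x ^ 2) * (1 - h x * w x)) :=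
        ha x ⟨lt_of_le_of_lt (le_max_left a s₁) hx.1, hx.2⟩
      linarith
  have hne : (Set.Ioo s₂ b).Nonempty := nonempty_Ioo.2 hs₂b
  have hbd : BddAbove (w '' Set.Ioo s₂ b) := by
    refine ⟨M, fun y hy => ?_⟩
    obtain ⟨s, hs, rfl⟩ := hy
    exact hbound s ⟨(le_max_right a s₁).trans hs.1.le, hs.2⟩
  have hmono' : MonotoneOn w (Set.Ioo s₂ b) :=
    (hmono.monotoneOn).mono Set.Ioo_subset_Ico_self
  refine ⟨sSup (w '' Set.Ioo s₂ b), ?_, hmono'.tendsto_nhdsWithin_Ioo_left hne hbd⟩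
  apply csSup_le (hne.image w)
  rintro y ⟨s, hs, rfl⟩
  exact hbound s ⟨(le_max_right a s₁).trans hs.1.le, hs.2⟩
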